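/- In two-color FLAG COLORING, the Grundy value of the properly 2-colored star graph S_i (one center vertex adjacent to i leaves) is: 0 if i = 0; 1 if i is odd; and 2 if i ≥ 2 is even. -/

import Mathlib

/-- The minimum excludant of a set of naturals. -/
noncomputable def mexN (S : Set ℕ) : ℕ := sInf {n | n ∉ S}

namespace FlagColoring

variable {V : Type} {C : Type}

/-- The subgraph of `G` induced by the color class `c` of the coloring `f`
(as a graph on the same vertex set). -/
def colorSub (G : SimpleGraph V) (f : V → C) (c : C) : SimpleGraph V where
  Adj u w := G.Adj u w ∧ f u = c ∧ f w = c
  symm := ⟨fun _ _ h => ⟨G.symm.symm _ _ h.1, h.2.2, h.2.1⟩⟩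
  loopless := ⟨fun u h => G.loopless.irrefl u h.1⟩

open Classical in
/-- One move of FLAG COLORING on the graph `G`: choose a vertex `v` and a color `c'`
different from the color `f v` of `v` and appearing on some neighbor of `v`, and recolor
the whole connected monochromatic component of `v` (its component in the subgraph induced
by the vertices of color `f v`) with `c'`. -/
def Move (G : SimpleGraph V) (f g : V → C) : Prop :=
  ∃ v c', c' ≠ f v ∧ (∃ u, G.Adj v u ∧ f u = c') ∧
    g = fun w => if (colorSub G f (f v)).Reachable v w then c' else f w

open Classical in
/-- The number of ordered pairs of adjacent, differently colored vertices.
Every move strictly decreases this quantity, so it bounds the length of play. -/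
noncomputable def boundary [Fintype V] (G : SimpleGraph V) (f : V → C) : ℕ :=
  (Finset.univ.filter (fun p : V × V => G.Adj p.1 p.2 ∧ f p.1 ≠ f p.2)).card

/-- Grundy value computation with fuel. -/
noncomputable def grundyAux (G : SimpleGraph V) : ℕ → (V → C) → ℕ
  | 0, _ => 0
  | (n+1), f => mexN {k | ∃ g, Move G f g ∧ grundyAux G n g = k}

/-- The Grundy value (nimber) of the FLAG COLORING position `(G, f)`. Since every move
strictly decreases `boundary`, fuel `boundary G f + 1` suffices to compute the true
Grundy value: the mex of the Grundy values of the options (`0` if there are no options).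
A position is a P-position exactly when its Grundy value is `0`. -/
noncomputable def grundy [Fintype V] (G : SimpleGraph V) (f : V → C) : ℕ :=
  grundyAux G (boundary G f + 1) f

end FlagColoring

/-- The star graph `S i`: one central vertex (`none`) adjacent to `i` leaves. -/
def starGraph (i : ℕ) : SimpleGraph (Option (Fin i)) :=
  SimpleGraph.fromRel (fun u v => u = none ∧ v ≠ none)

/-- The proper 2-coloring of the star: the center gets one color, the leaves the other. -/
def starColor (i : ℕ) : Option (Fin i) → Bool := fun v => v.isNone

section Aux

open FlagColoring

lemma mexN_eq_of {S : Set ℕ} {k : ℕ} (h1 : k ∉ S) (h2 : ∀ j < k, j ∈ S) :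
    mexN S = k := by
  refine le_antisymm (Nat.sInf_le h1) (le_csInf ⟨k, h1⟩ ?_)
  intro m hm
  by_contra hlt
  exact hm (h2 m (not_le.1 hlt))

lemma grundyAux_succ {V C : Type} (G : SimpleGraph V) (n : ℕ) (f : V → C) :
    grundyAux G (n + 1) f = mexN {k | ∃ g, Move G f g ∧ grundyAux G n g = k} := rfl

lemma grundyAux_of_no_move {V C : Type} (G : SimpleGraph V) (f : V → C)
    (h : ∀ g, ¬ Move G f g) (n : ℕ) : grundyAux G n f = 0 := by
  cases n with
  | zero => rfl
  | succ n =>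
    rw [grundyAux_succ]
    apply mexN_eq_of
    · rintro ⟨g, hg, -⟩; exact h g hg
    · intro j hj; omega

lemma bool_eq_not {a b : Bool} (h : a ≠ b) : a = !b := by
  cases a <;> cases b <;> simp_all

lemma walk_color {V : Type} {G : SimpleGraph V} {f : V → Bool} {c : Bool} :
    ∀ {v w : V}, (colorSub G f c).Walk v w → f v = c → f w = c := by
  intro v w p
  induction p with
  | nil => exact id
  | cons ha _ ih => exact fun _ => ih ha.2.2

lemma reach_eq_of_isolated {V : Type} {H : SimpleGraph V} {v w : V}
    (h : ∀ u, ¬ H.Adj v u) (hr : H.Reachable v w) : w = v := by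
  obtain ⟨p⟩ := hr
  cases p with
  | nil => rfl
  | cons ha _ => exact absurd ha (h _)

variable {i : ℕ}

lemma star_adj {u w : Option (Fin i)} :
    (starGraph i).Adj u w ↔ (u = none ∧ w ≠ none) ∨ (u ≠ none ∧ w = none) := by
  simp only [starGraph, SimpleGraph.fromRel_adj]
  constructor
  · rintro ⟨hne, h | h⟩
    · exact Or.inl h
    · exact Or.inr ⟨h.2, h.1⟩
  · rintro (⟨h1, h2⟩ | ⟨h1, h2⟩)
    · subst h1; exact ⟨fun e => h2 e.symm, Or.inl ⟨rfl, h2⟩⟩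
    · subst h2; exact ⟨h1, Or.inr ⟨rfl, h1⟩⟩

lemma reach_center {f : Option (Fin i) → Bool} {w : Option (Fin i)} :
    (colorSub (starGraph i) f (f none)).Reachable none w ↔ f w = f none := by
  constructor
  · rintro ⟨p⟩; exact walk_color p rfl
  · intro hw
    cases w with
    | none => exact SimpleGraph.Reachable.refl _
    | some j =>
      exact SimpleGraph.Adj.reachable
        ⟨star_adj.2 (Or.inl ⟨rfl, by simp⟩), rfl, hw⟩

lemma leaf_isolated {f : Option (Fin i) → Bool} {j : Fin i} (hj : f (some j) ≠ f none)
    (u : Option (Fin i)) : ¬ (colorSub (starGraph i) f (f (some j))).Adj (some j) u := by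
  rintro ⟨ha, h1, h2⟩
  rcases star_adj.1 ha with ⟨h, -⟩ | ⟨-, h⟩
  · exact Option.some_ne_none j h
  · subst h
    exact hj h2.symm

/-- The set of leaves colored differently from the center. -/
def diffs (f : Option (Fin i) → Bool) : Finset (Fin i) :=
  Finset.univ.filter (fun j => f (some j) ≠ f none)

lemma no_move_of_diffs_empty {f : Option (Fin i) → Bool} (h0 : diffs f = ∅)
    (g : Option (Fin i) → Bool) : ¬ Move (starGraph i) f g := by
  rintro ⟨v, c', hc', ⟨u, hadj, hu⟩, -⟩
  have key : ∀ j : Fin i, f (some j) = f none := by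
    intro j
    by_contra hj
    have : j ∈ diffs f := by simp [diffs, hj]
    simp [h0] at this
  rcases star_adj.1 hadj with ⟨hv, hu'⟩ | ⟨hv, hu'⟩
  · subst hv
    cases u with
    | none => exact hu' rfl
    | some j => exact hc' (by rw [← hu, key j])
  · subst hu'
    cases v with
    | none => exact hv rfl
    | some j => exact hc' (by rw [← hu]; exact (key j).symm)

lemma center_move {f : Option (Fin i) → Bool} {j : Fin i} (hj : f (some j) ≠ f none) :
    Move (starGraph i) f (fun _ => !f none) := by
  refine ⟨none, f (some j), hj, ⟨some j, star_adj.2 (Or.inl ⟨rfl, by simp⟩), rfl⟩, ?_⟩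
  funext w
  by_cases hw : (colorSub (starGraph i) f (f none)).Reachable none w
  · rw [if_pos hw]
    exact (bool_eq_not hj).symm ▸ rfl
  · rw [if_neg hw]
    have hwc : f w ≠ f none := fun h => hw (reach_center.2 h)
    exact (bool_eq_not hwc).symm

lemma leaf_reach {f : Option (Fin i) → Bool} {j : Fin i} (hj : f (some j) ≠ f none)
    {w : Option (Fin i)} :
    (colorSub (starGraph i) f (f (some j))).Reachable (some j) w ↔ w = some j := by
  constructor
  · exact reach_eq_of_isolated (leaf_isolated hj)
  · rintro rfl; exact SimpleGraph.Reachable.refl _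

lemma leaf_move {f : Option (Fin i) → Bool} {j : Fin i} (hj : f (some j) ≠ f none) :
    Move (starGraph i) f (fun w => if w = some j then f none else f w) := by
  refine ⟨some j, f none, Ne.symm hj, ⟨none, star_adj.2 (Or.inr ⟨by simp, rfl⟩), rfl⟩, ?_⟩
  funext w
  by_cases hw : w = some j
  · rw [if_pos hw, if_pos ((leaf_reach hj).2 hw)]
  · rw [if_neg hw, if_neg (fun hr => hw ((leaf_reach hj).1 hr))]

lemma move_cases {f g : Option (Fin i) → Bool} (h : Move (starGraph i) f g) :
    (g = fun _ => !f none) ∨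
    ∃ j : Fin i, f (some j) ≠ f none ∧
      g = fun w => if w = some j then f none else f w := by
  obtain ⟨v, c', hc', ⟨u, hadj, hu⟩, hg⟩ := h
  cases v with
  | none =>
    left
    have hc'' : c' = !f none := bool_eq_not hc'
    rw [hg]
    funext w
    by_cases hw : (colorSub (starGraph i) f (f none)).Reachable none w
    · rw [if_pos hw, hc'']
    · rw [if_neg hw]
      have hwc : f w ≠ f none := fun h => hw (reach_center.2 h)
      exact bool_eq_not hwc
  | some j =>
    right
    have hu' : u = none := by
      rcases star_adj.1 hadj with ⟨h', -⟩ | ⟨-, h'⟩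
      · exact absurd h' (Option.some_ne_none j)
      · exact h'
    subst hu'
    have hj : f (some j) ≠ f none := by rw [hu]; exact Ne.symm hc'
    refine ⟨j, hj, ?_⟩
    rw [hg]
    funext w
    by_cases hw : w = some j
    · rw [if_pos ((leaf_reach hj).2 hw), if_pos hw, ← hu]
    · rw [if_neg (fun hr => hw ((leaf_reach hj).1 hr)), if_neg hw]

lemma diffs_const (b : Bool) : diffs (fun _ : Option (Fin i) => b) = ∅ := by
  simp [diffs]

lemma diffs_leaf_move {f : Option (Fin i) → Bool} {j : Fin i}
    (hj : f (some j) ≠ f none) :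
    diffs (fun w => if w = some j then f none else f w) = (diffs f).erase j := by
  ext k
  by_cases hk : k = j
  · subst hk
    simp [diffs]
  · simp [diffs, Finset.mem_erase, hk, Option.some_inj]

/-- The claimed Grundy value as a function of the number of differing leaves. -/
def valm (m : ℕ) : ℕ := if m = 0 then 0 else if m % 2 = 1 then 1 else 2

lemma grundyAux_star (i : ℕ) : ∀ n (f : Option (Fin i) → Bool),
    (diffs f).card < n → grundyAux (starGraph i) n f = valm (diffs f).card := by
  intro n
  induction n with
  | zero => intro f hf; omega
  | succ n ih =>
    intro f hf
    by_cases h0 : (diffs f).card = 0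
    · rw [grundyAux_of_no_move _ _
        (no_move_of_diffs_empty (Finset.card_eq_zero.1 h0)), h0]
      rfl
    · obtain ⟨j, hj⟩ := Finset.card_pos.mp (by omega : 0 < (diffs f).card)
      have hjd : f (some j) ≠ f none := by
        simpa [diffs] using hj
      set m := (diffs f).card with hm
      rw [grundyAux_succ]
      have hmem0 : (0 : ℕ) ∈ {k | ∃ g, Move (starGraph i) f g ∧
          grundyAux (starGraph i) n g = k} := by
        refine ⟨fun _ => !f none, center_move hjd, ?_⟩
        exact grundyAux_of_no_move _ _ (no_move_of_diffs_empty (diffs_const _)) n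
      have hcard : (diffs (fun w => if w = some j then f none else f w)).card
          = m - 1 := by
        rw [diffs_leaf_move hjd, Finset.card_erase_of_mem hj]
      have hmemv : valm (m - 1) ∈ {k | ∃ g, Move (starGraph i) f g ∧
          grundyAux (starGraph i) n g = k} := by
        refine ⟨_, leaf_move hjd, ?_⟩
        rw [ih _ (by omega), hcard]
      have hsub : ∀ k ∈ {k | ∃ g, Move (starGraph i) f g ∧
          grundyAux (starGraph i) n g = k}, k = 0 ∨ k = valm (m - 1) := by
        rintro k ⟨g, hg, hk⟩
        rcases move_cases hg with rfl | ⟨j', hj', rfl⟩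
        · left
          rw [← hk]
          exact (grundyAux_of_no_move _ _
            (no_move_of_diffs_empty (diffs_const _)) n).symm ▸ rfl
        · right
          have hj'm : j' ∈ diffs f := by simp [diffs, hj']
          have : (diffs (fun w => if w = some j' then f none else f w)).card
              = m - 1 := by
            rw [diffs_leaf_move hj', Finset.card_erase_of_mem hj'm]
          rw [← hk, ih _ (by omega), this]
      rcases Nat.lt_or_ge m 2 with hm2 | hm2
      · -- m = 1
        have hm1 : m = 1 := by omega
        have hv : valm (m - 1) = 0 := by rw [hm1]; rfl
        have : valm m = 1 := by rw [hm1]; rfl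
        rw [this]
        apply mexN_eq_of
        · intro h1
          rcases hsub 1 h1 with h | h
          · omega
          · rw [hv] at h; omega
        · intro k hk
          interval_cases k
          exact hmem0
      · rcases Nat.mod_two_eq_zero_or_one m with hme | hmo
        · -- m even, ≥ 2 : valm (m-1) = 1, mex = 2
          have hv : valm (m - 1) = 1 := by
            have h1 : m - 1 ≠ 0 := by omega
            have h2 : (m - 1) % 2 = 1 := by omega
            simp [valm, h1, h2]
          have hvm : valm m = 2 := by
            have h1 : m ≠ 0 := by omega
            have h2 : ¬ m % 2 = 1 := by omega
            simp [valm, h1, h2]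
          rw [hvm]
          apply mexN_eq_of
          · intro h2
            rcases hsub 2 h2 with h | h
            · omega
            · rw [hv] at h; omega
          · intro k hk
            interval_cases k
            · exact hmem0
            · rw [← hv]; exact hmemv
        · -- m odd, ≥ 3 : valm (m-1) = 2, mex = 1
          have hv : valm (m - 1) = 2 := by
            have h1 : m - 1 ≠ 0 := by omega
            have h2 : ¬ (m - 1) % 2 = 1 := by omega
            simp [valm, h1, h2]
          have hvm : valm m = 1 := by
            have h1 : m ≠ 0 := by omega
            simp [valm, h1, hmo]
          rw [hvm]
          apply mexN_eq_of
          · intro h1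
            rcases hsub 1 h1 with h | h
            · omega
            · rw [hv] at h; omega
          · intro k hk
            interval_cases k
            exact hmem0

lemma diffs_starColor (i : ℕ) : diffs (starColor i) = Finset.univ := by
  ext j
  simp [diffs, starColor]

lemma star_boundary (i : ℕ) :
    i ≤ FlagColoring.boundary (starGraph i) (starColor i) := by
  classical
  unfold FlagColoring.boundary
  calc i = (Finset.univ : Finset (Fin i)).card := by simp
    _ ≤ _ := Finset.card_le_card_of_injOn
        (fun j => ((none : Option (Fin i)), some j))
        (fun j _ => by
          simp only [Finset.coe_filter, Set.mem_setOf_eq, Finset.mem_filter, Finset.mem_univ, true_and]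
          exact ⟨star_adj.2 (Or.inl ⟨rfl, by simp⟩), by simp [starColor]⟩)
        (fun a _ b _ h => by simpa using congrArg Prod.snd h)

end Aux

/-- In two-color FLAG COLORING, the Grundy value of the properly 2-colored star graph
`S_i` is: 0 if `i = 0`; 1 if `i` is odd; 2 if `i ≥ 2` is even. -/
theorem star_grundy (i : ℕ) :
    FlagColoring.grundy (starGraph i) (starColor i) =
      (if i = 0 then 0 else if i % 2 = 1 then 1 else 2) := by
  have h := grundyAux_star i (FlagColoring.boundary (starGraph i) (starColor i) + 1)
    (starColor i)
    (by
      rw [diffs_starColor, Finset.card_univ, Fintype.card_fin]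
      exact Nat.lt_succ_of_le (star_boundary i))
  rw [FlagColoring.grundy, h, diffs_starColor, Finset.card_univ, Fintype.card_fin]
  rfl
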